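/- Let K = (C, ⟨Q_1,…,Q_k⟩) be a pure-form CMI with repeated-index set 𝕀_K, and let P_1,…,P_t be the nonempty sets among Q_1\𝕀_K,…,Q_k\𝕀_K. Then, for any joint distribution of X_1,…,X_n, K is valid if and only if both (C, ⟨𝕀_K, 𝕀_K⟩) and (C, ⟨P_1,…,P_t⟩) are valid; equivalently, K is valid if and only if H(X_{𝕀_K} | X_C) = 0 and J(X_{P_i}, 1≤i≤t | X_C) = 0. -/

import Mathlib

open scoped Classical

namespace Paper

variable {n : ℕ}

/-- The marginal distribution of the coordinates in `α` of a joint distribution `p` of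
the discrete random variables `X_1, …, X_n` (each taking countably many values, coded
as natural numbers). -/
noncomputable def marginal (p : PMF (Fin n → ℕ)) (α : Finset (Fin n)) :
    PMF ({ i // i ∈ α } → ℕ) :=
  p.map fun x i => x i.1

/-- The Shannon (joint) entropy `H(X_α)`. -/
noncomputable def Hm (p : PMF (Fin n → ℕ)) (α : Finset (Fin n)) : ℝ :=
  ∑' y, Real.negMulLog ((marginal p α) y).toReal

/-- The conditional entropy `H(X_β | X_α) = H(X_{β ∪ α}) - H(X_α)`. -/
noncomputable def Hc (p : PMF (Fin n → ℕ)) (β α : Finset (Fin n)) : ℝ :=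
  Hm p (β ∪ α) - Hm p α

/-- Every individual random variable `X_i` has finite Shannon entropy
(the series defining `H(X_i)` is summable). -/
def FiniteEntropy (p : PMF (Fin n → ℕ)) : Prop :=
  ∀ i : Fin n, Summable fun y : ℕ => Real.negMulLog ((p.map fun x => x i) y).toReal

/-- `J(X_{Q_1}, …, X_{Q_k} | X_C) = (∑ i, H(X_{Q_i}|X_C)) - H(X_{Q_1},…,X_{Q_k}|X_C)`;
the joint conditional entropy of the tuple `(X_{Q_1},…,X_{Q_k})` equals
`H(X_{∪ i, Q_i} | X_C)` since the two tuples determine each other. -/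
noncomputable def J (p : PMF (Fin n → ℕ)) (C : Finset (Fin n))
    (Qs : Multiset (Finset (Fin n))) : ℝ :=
  (Qs.map fun Q => Hc p Q C).sum - Hc p Qs.sup C

/-- A conditional mutual independency (CMI) on `{1, …, n}`: a conditioning set `C`
together with a finite multiset `⟨Q_1, …, Q_k⟩` of subsets of `{1, …, n}`. -/
structure CMI (n : ℕ) where
  C : Finset (Fin n)
  Qs : Multiset (Finset (Fin n))

/-- `K` is valid for the joint distribution `p`. -/
def Valid (p : PMF (Fin n → ℕ)) (K : CMI n) : Prop :=
  J p K.C K.Qs = 0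

/-- `K` is degenerate: valid for every finite-entropy joint distribution. -/
def Degenerate (K : CMI n) : Prop :=
  ∀ p : PMF (Fin n → ℕ), FiniteEntropy p → Valid p K

/-- `K ∼ K'`: valid for exactly the same finite-entropy joint distributions. -/
def Equivalent (K K' : CMI n) : Prop :=
  ∀ p : PMF (Fin n → ℕ), FiniteEntropy p → (Valid p K ↔ Valid p K')

/-- `K` implies `K'`. -/
def Implies (K K' : CMI n) : Prop :=
  ∀ p : PMF (Fin n → ℕ), FiniteEntropy p → Valid p K → Valid p K'

/-- `K` is in pure form: every `Q_i` is nonempty and disjoint from `C`. -/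
def IsPure (K : CMI n) : Prop :=
  ∀ Q ∈ K.Qs, Q ≠ ∅ ∧ Q ∩ K.C = ∅

/-- The pure form `pur(K) = (C, ⟨Q_i \ C : Q_i \ C ≠ ∅⟩)`. -/
noncomputable def pur (K : CMI n) : CMI n :=
  ⟨K.C, (K.Qs.map fun Q => Q \ K.C).filter fun Q => Q ≠ ∅⟩

/-- The set `𝕀_K` of repeated indices of `K`: indices lying in `Q_i ∩ Q_j` for two
distinct entries `i ≠ j` of the multiset (automatically `∅` when `k ≤ 1`). -/
noncomputable def repSet (K : CMI n) : Finset (Fin n) :=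
  Finset.univ.filter fun q => 2 ≤ Multiset.card (K.Qs.filter fun Q => q ∈ Q)

/-- The multiset `⟨P_1, …, P_t⟩` of nonempty sets among the `Q_i \ 𝕀_K`. -/
noncomputable def parts (K : CMI n) : Multiset (Finset (Fin n)) :=
  (K.Qs.map fun Q => Q \ repSet K).filter fun P => P ≠ ∅

/-- The multiset of the `P_j`-entries of the canonical form `can(K)`
(general notation). -/
noncomputable def canParts (K : CMI n) : Multiset (Finset (Fin n)) :=
  if Multiset.card K.Qs ≤ 1 then 0
  else if repSet K ≠ ∅ ∧ Multiset.card (parts K) ≤ 1 then 0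
  else parts K

/-- The canonical form `can(K)` (of a pure-form CMI); all degenerate canonical forms
`(·,⟨⟩)` are represented by `⟨∅, 0⟩`. -/
noncomputable def can (K : CMI n) : CMI n :=
  if Multiset.card K.Qs ≤ 1 then ⟨∅, 0⟩
  else if repSet K = ∅ then ⟨K.C, parts K⟩
  else if Multiset.card (parts K) ≤ 1 then ⟨K.C, {repSet K, repSet K}⟩
  else ⟨K.C, repSet K ::ₘ repSet K ::ₘ parts K⟩

/-- `R_K^{K'}`: the CMI "`K'` conditioning on `K`"; the degenerate case `(·,⟨⟩)` is
represented by `⟨∅, 0⟩`. -/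
noncomputable def RCond (K K' : CMI n) : CMI n :=
  let I := repSet (pur K)
  let I' := repSet (pur K')
  let Ts := ((canParts (pur K')).map fun P => P \ I).filter fun T => T ≠ ∅
  if I' \ I = ∅ ∧ Multiset.card Ts ≤ 1 then ⟨∅, 0⟩
  else if I' \ I = ∅ then ⟨K'.C \ I, Ts⟩
  else if Multiset.card Ts ≤ 1 then ⟨K'.C \ I, {I' \ I, I' \ I}⟩
  else ⟨K'.C \ I, (I' \ I) ::ₘ (I' \ I) ::ₘ Ts⟩


/-! ### Auxiliary development -/

section AuxPMF

open ENNReal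

variable {A B : Type*}

/-- Shannon entropy of a PMF, valued in `ℝ≥0∞`. -/
noncomputable def He (P : PMF A) : ℝ≥0∞ :=
  ∑' a, ENNReal.ofReal (Real.negMulLog (P a).toReal)

lemma pmf_toReal_le_one (P : PMF A) (a : A) : (P a).toReal ≤ 1 := by
  have := (ENNReal.toReal_le_toReal (PMF.apply_ne_top P a) ENNReal.one_ne_top).2
    (PMF.coe_le_one P a)
  simpa using this

lemma pull (P : PMF A) (f : A → B) (g : B → ℝ≥0∞) :
    ∑' b, (P.map f) b * g b = ∑' a, P a * g (f a) := by
  calc ∑' b, (P.map f) b * g b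
      = ∑' b, ∑' a, (if b = f a then P a * g b else 0) := by
        refine tsum_congr fun b => ?_
        rw [PMF.map_apply, ← ENNReal.tsum_mul_right]
        exact tsum_congr fun a => by split <;> simp
    _ = ∑' a, ∑' b, (if b = f a then P a * g b else 0) := ENNReal.tsum_comm
    _ = ∑' a, P a * g (f a) := by
        refine tsum_congr fun a => ?_
        rw [show (fun b => if b = f a then P a * g b else 0)
            = fun b => if b = f a then P a * g (f a) else 0 from ?_, tsum_ite_eq]
        funext b
        by_cases h : b = f a <;> simp [h]

lemma le_map (P : PMF A) (f : A → B) (a : A) : P a ≤ (P.map f) (f a) := by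
  rw [PMF.map_apply]
  refine le_trans ?_ (ENNReal.le_tsum a)
  simp

lemma map_inj_apply (P : PMF A) {f : A → B} (hf : Function.Injective f) (a : A) :
    (P.map f) (f a) = P a := by
  rw [PMF.map_apply, tsum_eq_single a]
  · simp
  · intro b hb
    exact if_neg fun h => hb (hf h).symm

lemma map_apply_of_not_mem_range (P : PMF A) {f : A → B} {b : B} (hb : b ∉ Set.range f) :
    (P.map f) b = 0 := by
  rw [PMF.map_apply, ENNReal.tsum_eq_zero]
  intro a
  exact if_neg fun h => hb ⟨a, h.symm⟩

lemma He_map_inj (P : PMF A) {f : A → B} (hf : Function.Injective f) :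
    He (P.map f) = He P := by
  have hs : Function.support
      (fun b => ENNReal.ofReal (Real.negMulLog ((P.map f) b).toReal)) ⊆ Set.range f := by
    intro b hb
    by_contra hbr
    exact hb (by simp [map_apply_of_not_mem_range P hbr, Real.negMulLog_zero])
  rw [He, He, ← hf.tsum_eq hs]
  exact tsum_congr fun a => by rw [map_inj_apply P hf]

lemma He_map_rep (P : PMF A) (f : A → B) :
    He (P.map f) = ∑' a, P a * ENNReal.ofReal (-Real.log ((P.map f) (f a)).toReal) := by
  rw [He, ← pull P f (fun b => ENNReal.ofReal (-Real.log ((P.map f) b).toReal))]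
  refine tsum_congr fun b => ?_
  have h1 : ((P.map f) b) ≠ ⊤ := PMF.apply_ne_top _ _
  rw [show Real.negMulLog ((P.map f) b).toReal
      = ((P.map f) b).toReal * (-Real.log ((P.map f) b).toReal) by
        rw [Real.negMulLog_def]; ring]
  rw [ENNReal.ofReal_mul ENNReal.toReal_nonneg, ENNReal.ofReal_toReal h1]

lemma ennreal_aux {u s N : ℝ≥0∞} (hut : u ≠ ⊤) : u * (N / (u * s)) ≤ N / s := by
  by_cases hu : u = 0
  · simp [hu]
  · rw [div_eq_mul_inv, ENNReal.mul_inv (Or.inl hu) (Or.inl hut), div_eq_mul_inv]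
    calc u * (N * (u⁻¹ * s⁻¹)) = (u * u⁻¹) * (N * s⁻¹) := by ring
      _ = N * s⁻¹ := by rw [ENNReal.mul_inv_cancel hu hut, one_mul]
      _ ≤ N * s⁻¹ := le_rfl

end AuxPMF

section AuxMarginal

open ENNReal

variable {n : ℕ}

/-- Restriction map. -/
noncomputable def res (α : Finset (Fin n)) : (Fin n → ℕ) → ({ i // i ∈ α } → ℕ) :=
  fun x i => x i.1

lemma marginal_eq (p : PMF (Fin n → ℕ)) (α : Finset (Fin n)) :
    marginal p α = p.map (res α) := rfl

/-- Projection between restriction spaces. -/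
noncomputable def proj {α β : Finset (Fin n)} (h : α ⊆ β) :
    ({ i // i ∈ β } → ℕ) → ({ i // i ∈ α } → ℕ) := fun y i => y ⟨i.1, h i.2⟩

lemma marginal_comp {α β : Finset (Fin n)} (h : α ⊆ β) (p : PMF (Fin n → ℕ)) :
    marginal p α = (marginal p β).map (proj h) := by
  rw [marginal_eq, marginal_eq, PMF.map_comp]
  rfl

/-- Entropy of the marginal on `α`, valued in `ℝ≥0∞`. -/
noncomputable def HeM (p : PMF (Fin n → ℕ)) (α : Finset (Fin n)) : ℝ≥0∞ :=
  He (marginal p α)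

/-- The "surprisal" of the `α`-marginal at `x`. -/
noncomputable def ell (p : PMF (Fin n → ℕ)) (α : Finset (Fin n)) (x : Fin n → ℕ) : ℝ :=
  -Real.log ((marginal p α (res α x)).toReal)

lemma ell_nonneg (p : PMF (Fin n → ℕ)) (α : Finset (Fin n)) (x : Fin n → ℕ) :
    0 ≤ ell p α x := by
  have h1 : ((marginal p α (res α x))).toReal ≤ 1 := pmf_toReal_le_one _ _
  have := Real.log_nonpos ENNReal.toReal_nonneg h1
  unfold ell
  linarith

lemma HeM_rep (p : PMF (Fin n → ℕ)) (α : Finset (Fin n)) :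
    HeM p α = ∑' x, p x * ENNReal.ofReal (ell p α x) := by
  rw [HeM, marginal_eq, He_map_rep p (res α)]
  rfl

lemma le_marginal (p : PMF (Fin n → ℕ)) (α : Finset (Fin n)) (x : Fin n → ℕ) :
    p x ≤ marginal p α (res α x) := by
  rw [marginal_eq]
  exact le_map p (res α) x

lemma marginal_le_marginal {α β : Finset (Fin n)} (h : α ⊆ β) (p : PMF (Fin n → ℕ))
    (x : Fin n → ℕ) : marginal p β (res β x) ≤ marginal p α (res α x) := by
  rw [marginal_comp h p]
  exact le_map (marginal p β) (proj h) (res β x)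

lemma HeM_mono {α β : Finset (Fin n)} (h : α ⊆ β) (p : PMF (Fin n → ℕ)) :
    HeM p α ≤ HeM p β := by
  rw [HeM_rep, HeM_rep]
  refine ENNReal.tsum_le_tsum fun x => ?_
  by_cases hx : p x = 0
  · simp [hx]
  · refine mul_le_mul_right (ENNReal.ofReal_le_ofReal ?_) _
    have h1 : p x ≤ marginal p β (res β x) := le_marginal p β x
    have h2 : marginal p β (res β x) ≤ marginal p α (res α x) := marginal_le_marginal h p x
    have hb0 : marginal p β (res β x) ≠ 0 := fun h0 => hx (le_antisymm (h0 ▸ h1) (zero_le))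
    have hbt : marginal p β (res β x) ≠ ⊤ := PMF.apply_ne_top _ _
    have hat : marginal p α (res α x) ≠ ⊤ := PMF.apply_ne_top _ _
    have hlog := Real.log_le_log (ENNReal.toReal_pos hb0 hbt)
      ((ENNReal.toReal_le_toReal hbt hat).2 h2)
    unfold ell
    linarith

lemma HeM_submod (p : PMF (Fin n → ℕ)) {S A B : Finset (Fin n)}
    (hSA : S ⊆ A) (hSB : S ⊆ B) :
    HeM p (A ∪ B) + HeM p S ≤ HeM p A + HeM p B := by
  set U := A ∪ B with hU
  have hAU : A ⊆ U := Finset.subset_union_left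
  have hBU : B ⊆ U := Finset.subset_union_right
  have hSU : S ⊆ U := hSA.trans hAU
  set q : (Fin n → ℕ) → ℝ≥0∞ := fun x =>
    p x * (marginal p A (res A x) * marginal p B (res B x) /
      (marginal p U (res U x) * marginal p S (res S x))) with hq
  have claimA : ∀ x, p x * ENNReal.ofReal (ell p U x) + p x * ENNReal.ofReal (ell p S x) + p x
      ≤ p x * ENNReal.ofReal (ell p A x) + p x * ENNReal.ofReal (ell p B x) + q x := by
    intro x
    by_cases hx : p x = 0
    · simp [hx, hq]
    · have hat : marginal p A (res A x) ≠ ⊤ := PMF.apply_ne_top _ _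
      have hbt : marginal p B (res B x) ≠ ⊤ := PMF.apply_ne_top _ _
      have hut : marginal p U (res U x) ≠ ⊤ := PMF.apply_ne_top _ _
      have hst : marginal p S (res S x) ≠ ⊤ := PMF.apply_ne_top _ _
      have ha0 : marginal p A (res A x) ≠ 0 :=
        fun h0 => hx (le_antisymm (h0 ▸ le_marginal p A x) (zero_le))
      have hb0 : marginal p B (res B x) ≠ 0 :=
        fun h0 => hx (le_antisymm (h0 ▸ le_marginal p B x) (zero_le))
      have hu0 : marginal p U (res U x) ≠ 0 :=
        fun h0 => hx (le_antisymm (h0 ▸ le_marginal p U x) (zero_le))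
      have hs0 : marginal p S (res S x) ≠ 0 :=
        fun h0 => hx (le_antisymm (h0 ▸ le_marginal p S x) (zero_le))
      set a' := (marginal p A (res A x)).toReal with ha'
      set b' := (marginal p B (res B x)).toReal with hb'
      set u' := (marginal p U (res U x)).toReal with hu'
      set s' := (marginal p S (res S x)).toReal with hs'
      set px' := (p x).toReal with hpx'
      have hap : 0 < a' := ENNReal.toReal_pos ha0 hat
      have hbp : 0 < b' := ENNReal.toReal_pos hb0 hbt
      have hup : 0 < u' := ENNReal.toReal_pos hu0 hut
      have hsp : 0 < s' := ENNReal.toReal_pos hs0 hst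
      have hpxp : 0 < px' := ENNReal.toReal_pos hx (PMF.apply_ne_top _ _)
      set t := a' * b' / (u' * s') with ht
      have htp : 0 < t := by positivity
      -- the real inequality
      have hlogt : Real.log t = (ell p U x + ell p S x) - (ell p A x + ell p B x) := by
        rw [ht, Real.log_div (by positivity) (by positivity),
          Real.log_mul hap.ne' hbp.ne', Real.log_mul hup.ne' hsp.ne']
        unfold ell
        rw [← ha', ← hb', ← hu', ← hs']
        ring
      have hkey : ell p U x + ell p S x + 1 ≤ ell p A x + ell p B x + t := by
        have := Real.log_le_sub_one_of_pos htp
        linarith [hlogt]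
      -- convert both sides to `ofReal`
      have hqx : q x = ENNReal.ofReal (px' * t) := by
        simp only [hq]
        have e1 : marginal p A (res A x) * marginal p B (res B x)
            = ENNReal.ofReal (a' * b') := by
          rw [ENNReal.ofReal_mul hap.le, ENNReal.ofReal_toReal hat, ENNReal.ofReal_toReal hbt]
        have e2 : marginal p U (res U x) * marginal p S (res S x)
            = ENNReal.ofReal (u' * s') := by
          rw [ENNReal.ofReal_mul hup.le, ENNReal.ofReal_toReal hut, ENNReal.ofReal_toReal hst]
        rw [e1, e2, ← ENNReal.ofReal_div_of_pos (by positivity), ← ht,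
          ← ENNReal.ofReal_toReal (PMF.apply_ne_top p x), ← hpx',
          ← ENNReal.ofReal_mul hpxp.le]
      have hpxe : p x = ENNReal.ofReal px' := by
        rw [hpx', ENNReal.ofReal_toReal (PMF.apply_ne_top p x)]
      have ofr : ∀ c : ℝ, p x * ENNReal.ofReal c = ENNReal.ofReal (px' * c) := fun c => by
        rw [hpxe, ← ENNReal.ofReal_mul hpxp.le]
      have hell : ∀ γ : Finset (Fin n), 0 ≤ px' * ell p γ x := fun γ =>
        mul_nonneg ENNReal.toReal_nonneg (ell_nonneg p γ x)
      have hsum2 : ENNReal.ofReal (px' * ell p U x + px' * ell p S x + px')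
          = p x * ENNReal.ofReal (ell p U x) + p x * ENNReal.ofReal (ell p S x) + p x := by
        rw [ENNReal.ofReal_add (add_nonneg (hell U) (hell S)) hpxp.le,
          ENNReal.ofReal_add (hell U) (hell S), ← ofr (ell p U x),
          ← ofr (ell p S x), ← hpxe]
      have hsum3 : ENNReal.ofReal (px' * ell p A x + px' * ell p B x + px' * t)
          = p x * ENNReal.ofReal (ell p A x) + p x * ENNReal.ofReal (ell p B x) + q x := by
        rw [ENNReal.ofReal_add (add_nonneg (hell A) (hell B))
            (mul_nonneg ENNReal.toReal_nonneg htp.le),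
          ENNReal.ofReal_add (hell A) (hell B), ← ofr (ell p A x),
          ← ofr (ell p B x), ← hqx]
      rw [← hsum2, ← hsum3]
      refine ENNReal.ofReal_le_ofReal ?_
      nlinarith [mul_le_mul_of_nonneg_left hkey hpxp.le]
  have claimB : ∑' x, q x ≤ 1 := by
    set g : ({ i // i ∈ U } → ℕ) → ℝ≥0∞ := fun y =>
      marginal p A (proj hAU y) * marginal p B (proj hBU y) /
        (marginal p U y * marginal p S (proj hSU y)) with hg
    have hqg : ∀ x, q x = p x * g (res U x) := fun x => rfl
    have e1 : ∑' x, q x = ∑' y, (marginal p U) y * g y := by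
      simp only [hqg]
      rw [marginal_eq]
      exact (pull p (res U) g).symm
    rw [e1]
    set F : ({ i // i ∈ A } → ℕ) × ({ i // i ∈ B } → ℕ) → ℝ≥0∞ := fun z =>
      if proj hSA z.1 = proj hSB z.2 then
        marginal p A z.1 * marginal p B z.2 / marginal p S (proj hSA z.1) else 0 with hF
    set e : ({ i // i ∈ U } → ℕ) → ({ i // i ∈ A } → ℕ) × ({ i // i ∈ B } → ℕ) :=
      fun y => (proj hAU y, proj hBU y) with he
    have hcompat : ∀ y, proj hSA (proj hAU y) = proj hSB (proj hBU y) := fun y => rfl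
    have step2 : ∀ y, marginal p U y * g y ≤ F (e y) := by
      intro y
      have hFe : F (e y) = marginal p A (proj hAU y) * marginal p B (proj hBU y) /
          marginal p S (proj hSU y) := by
        rw [hF, he]
        exact if_pos (hcompat y)
      rw [hFe, hg]
      exact ennreal_aux (PMF.apply_ne_top _ _)
    have einj : Function.Injective e := by
      intro y y' h
      have hA := congrFun (congrArg Prod.fst h)
      have hB := congrFun (congrArg Prod.snd h)
      funext i
      rcases Finset.mem_union.1 i.2 with hi | hi
      · exact hA ⟨i.1, hi⟩
      · exact hB ⟨i.1, hi⟩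
    have step3 : ∑' y, F (e y) ≤ ∑' z, F z :=
      ENNReal.summable.tsum_le_tsum_of_inj e einj (fun c _ => zero_le) (fun y => le_rfl)
        ENNReal.summable
    have step4 : ∑' z, F z ≤ 1 := by
      rw [ENNReal.tsum_prod']
      have inner : ∀ a, ∑' b, F (a, b) ≤ marginal p A a := by
        intro a
        have hsplit : ∀ b, F (a, b) = (marginal p A a / marginal p S (proj hSA a)) *
            (if proj hSA a = proj hSB b then marginal p B b else 0) := by
          intro b
          rw [hF]
          dsimp only
          split
          · rw [div_eq_mul_inv, div_eq_mul_inv]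
            ring
          · simp
        rw [tsum_congr hsplit, ENNReal.tsum_mul_left]
        have hmap : ∑' b, (if proj hSA a = proj hSB b then marginal p B b else 0)
            = marginal p S (proj hSA a) := by
          rw [marginal_comp hSB p, PMF.map_apply]
          refine tsum_congr fun b => ?_
          by_cases h : proj hSA a = proj hSB b <;> simp [h]
        rw [hmap]
        by_cases hs : marginal p S (proj hSA a) = 0
        · have ha : marginal p A a = 0 := by
            have h1 : marginal p A a ≤ marginal p S (proj hSA a) := by
              rw [marginal_comp hSA p]
              exact le_map _ _ _
            exact le_antisymm (hs ▸ h1) (zero_le)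
          simp [hs, ha]
        · rw [ENNReal.div_mul_cancel hs (PMF.apply_ne_top _ _)]
      exact le_trans (ENNReal.tsum_le_tsum inner) (le_of_eq (PMF.tsum_coe _))
    exact le_trans (ENNReal.tsum_le_tsum step2) (le_trans step3 step4)
  have main : HeM p U + HeM p S + 1 ≤ HeM p A + HeM p B + 1 := by
    calc HeM p U + HeM p S + 1
        = ∑' x, (p x * ENNReal.ofReal (ell p U x) + p x * ENNReal.ofReal (ell p S x) + p x) := by
          rw [ENNReal.tsum_add, ENNReal.tsum_add, HeM_rep, HeM_rep, PMF.tsum_coe]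
      _ ≤ ∑' x, (p x * ENNReal.ofReal (ell p A x) + p x * ENNReal.ofReal (ell p B x) + q x) :=
          ENNReal.tsum_le_tsum claimA
      _ = (∑' x, p x * ENNReal.ofReal (ell p A x)) + (∑' x, p x * ENNReal.ofReal (ell p B x))
            + ∑' x, q x := by rw [ENNReal.tsum_add, ENNReal.tsum_add]
      _ = HeM p A + HeM p B + ∑' x, q x := by rw [← HeM_rep, ← HeM_rep]
      _ ≤ HeM p A + HeM p B + 1 := add_le_add le_rfl claimB
  exact (ENNReal.add_le_add_iff_right ENNReal.one_ne_top).1 main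

lemma marginal_empty_apply (p : PMF (Fin n → ℕ)) (y : { i // i ∈ (∅ : Finset (Fin n)) } → ℕ) :
    marginal p (∅ : Finset (Fin n)) y = 1 := by
  rw [marginal_eq, PMF.map_apply]
  have hall : ∀ x, y = res (∅ : Finset (Fin n)) x :=
    fun x => funext fun i => absurd i.2 (Finset.notMem_empty i.1)
  refine Eq.trans (tsum_congr fun x => if_pos (hall x)) (PMF.tsum_coe p)

lemma HeM_empty (p : PMF (Fin n → ℕ)) : HeM p (∅ : Finset (Fin n)) = 0 := by
  rw [HeM, He]
  simp [marginal_empty_apply, Real.negMulLog_one]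

lemma HeM_singleton_ne_top (p : PMF (Fin n → ℕ)) (hp : FiniteEntropy p) (i : Fin n) :
    HeM p {i} ≠ ⊤ := by
  have hres : res ({i} : Finset (Fin n)) =
      (fun (v : ℕ) (_ : { j // j ∈ ({i} : Finset (Fin n)) }) => v) ∘
        (fun (x : Fin n → ℕ) => x i) := by
    funext x
    funext j
    show x j.1 = x i
    rw [Finset.mem_singleton.1 j.2]
  have hinj : Function.Injective
      (fun (v : ℕ) (_ : { j // j ∈ ({i} : Finset (Fin n)) }) => v) :=
    fun v w h => congrFun h ⟨i, Finset.mem_singleton_self i⟩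
  have heq : HeM p {i} = He (p.map (fun x => x i)) := by
    rw [HeM, marginal_eq, hres, ← PMF.map_comp, He_map_inj _ hinj]
  rw [heq, He]
  have hnn : ∀ y : ℕ, 0 ≤ Real.negMulLog ((p.map fun x => x i) y).toReal := fun y =>
    Real.negMulLog_nonneg ENNReal.toReal_nonneg (pmf_toReal_le_one _ _)
  rw [← ENNReal.ofReal_tsum_of_nonneg hnn (hp i)]
  exact ENNReal.ofReal_ne_top

lemma HeM_ne_top (p : PMF (Fin n → ℕ)) (hp : FiniteEntropy p) (α : Finset (Fin n)) :
    HeM p α ≠ ⊤ := by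
  induction α using Finset.induction_on with
  | empty => rw [HeM_empty]; exact ENNReal.zero_ne_top
  | @insert i s hi ih =>
    have h1 : HeM p (insert i s) + HeM p (∅ : Finset (Fin n)) ≤ HeM p {i} + HeM p s := by
      have := HeM_submod p (S := (∅ : Finset (Fin n))) (A := {i}) (B := s)
        (Finset.empty_subset _) (Finset.empty_subset _)
      rwa [← Finset.insert_eq] at this
    rw [HeM_empty, add_zero] at h1
    exact (h1.trans_lt (lt_top_iff_ne_top.2
      (ENNReal.add_ne_top.2 ⟨HeM_singleton_ne_top p hp i, ih⟩))).ne

lemma Hm_eq (p : PMF (Fin n → ℕ)) (α : Finset (Fin n)) : Hm p α = (HeM p α).toReal := by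
  simp only [Hm, HeM, He]
  rw [ENNReal.tsum_toReal_eq (fun _ => ENNReal.ofReal_ne_top)]
  refine tsum_congr fun y => ?_
  rw [ENNReal.toReal_ofReal
    (Real.negMulLog_nonneg ENNReal.toReal_nonneg (pmf_toReal_le_one _ _))]

lemma Hm_nonneg (p : PMF (Fin n → ℕ)) (α : Finset (Fin n)) : 0 ≤ Hm p α := by
  rw [Hm_eq]
  exact ENNReal.toReal_nonneg

lemma Hm_mono (p : PMF (Fin n → ℕ)) (hp : FiniteEntropy p) {α β : Finset (Fin n)}
    (h : α ⊆ β) : Hm p α ≤ Hm p β := by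
  rw [Hm_eq, Hm_eq]
  exact (ENNReal.toReal_le_toReal (HeM_ne_top p hp α) (HeM_ne_top p hp β)).2 (HeM_mono h p)

lemma Hm_submod (p : PMF (Fin n → ℕ)) (hp : FiniteEntropy p) {S A B : Finset (Fin n)}
    (hSA : S ⊆ A) (hSB : S ⊆ B) :
    Hm p (A ∪ B) + Hm p S ≤ Hm p A + Hm p B := by
  rw [Hm_eq, Hm_eq, Hm_eq, Hm_eq,
    ← ENNReal.toReal_add (HeM_ne_top p hp _) (HeM_ne_top p hp _),
    ← ENNReal.toReal_add (HeM_ne_top p hp _) (HeM_ne_top p hp _)]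
  exact (ENNReal.toReal_le_toReal
    (ENNReal.add_ne_top.2 ⟨HeM_ne_top p hp _, HeM_ne_top p hp _⟩)
    (ENNReal.add_ne_top.2 ⟨HeM_ne_top p hp _, HeM_ne_top p hp _⟩)).2 (HeM_submod p hSA hSB)

end AuxMarginal

section AuxHc

variable {n : ℕ} (p : PMF (Fin n → ℕ))

lemma Hc_nonneg (hp : FiniteEntropy p) (β α : Finset (Fin n)) : 0 ≤ Hc p β α := by
  simp only [Hc]
  have := Hm_mono p hp (Finset.subset_union_right (s₁ := β) (s₂ := α))
  linarith

lemma Hc_mono_left (hp : FiniteEntropy p) {β β' : Finset (Fin n)} (α : Finset (Fin n))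
    (h : β ⊆ β') : Hc p β α ≤ Hc p β' α := by
  simp only [Hc]
  have := Hm_mono p hp (Finset.union_subset_union h (Finset.Subset.refl α))
  linarith

lemma Hc_empty (C : Finset (Fin n)) : Hc p ∅ C = 0 := by
  simp [Hc, Finset.empty_union]

lemma Hc_subadd (hp : FiniteEntropy p) (A B C : Finset (Fin n)) :
    Hc p (A ∪ B) C ≤ Hc p A C + Hc p B C := by
  have hs : Hm p ((A ∪ C) ∪ (B ∪ C)) + Hm p C ≤ Hm p (A ∪ C) + Hm p (B ∪ C) :=
    Hm_submod p hp Finset.subset_union_right Finset.subset_union_right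
  have hm : Hm p ((A ∪ B) ∪ C) ≤ Hm p ((A ∪ C) ∪ (B ∪ C)) := by
    refine Hm_mono p hp ?_
    intro a ha
    simp only [Finset.mem_union] at ha ⊢
    tauto
  simp only [Hc]
  linarith

lemma Hc_single_le (hp : FiniteEntropy p) {q : Fin n} {Q1 Q2 C : Finset (Fin n)}
    (hq1 : q ∈ Q1) (hq2 : q ∈ Q2) :
    Hc p {q} C ≤ Hc p Q1 C + Hc p Q2 C - Hc p (Q1 ∪ Q2) C := by
  have hs1 : Hm p ((Q1 ∪ C) ∪ ({q} ∪ (Q2 ∪ C))) + Hm p ({q} ∪ C)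
      ≤ Hm p (Q1 ∪ C) + Hm p ({q} ∪ (Q2 ∪ C)) := by
    refine Hm_submod p hp ?_ ?_
    · exact Finset.union_subset_union (Finset.singleton_subset_iff.2 hq1)
        (Finset.Subset.refl C)
    · exact Finset.union_subset_union (Finset.Subset.refl {q}) Finset.subset_union_right
  have hm1 : Hm p ((Q1 ∪ Q2) ∪ C) ≤ Hm p ((Q1 ∪ C) ∪ ({q} ∪ (Q2 ∪ C))) := by
    refine Hm_mono p hp ?_
    intro a ha
    simp only [Finset.mem_union] at ha ⊢
    tauto
  have hm2 : Hm p ({q} ∪ (Q2 ∪ C)) ≤ Hm p (Q2 ∪ C) := by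
    refine Hm_mono p hp (Finset.union_subset ?_ (Finset.Subset.refl _))
    exact Finset.singleton_subset_iff.2 (Finset.mem_union_left C hq2)
  simp only [Hc]
  linarith

lemma Hc_eq_sdiff (hp : FiniteEntropy p) {I C : Finset (Fin n)} (hI : Hc p I C = 0)
    (Q : Finset (Fin n)) : Hc p Q C = Hc p (Q \ I) C := by
  have le1 : Hc p (Q \ I) C ≤ Hc p Q C := Hc_mono_left p hp C Finset.sdiff_subset
  have le2 : Hc p Q C ≤ Hc p (Q ∪ I) C := Hc_mono_left p hp C Finset.subset_union_left
  have le3 : Hc p (Q ∪ I) C ≤ Hc p (Q \ I) C + Hc p I C := by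
    have := Hc_subadd p hp (Q \ I) I C
    rwa [Finset.sdiff_union_self_eq_union] at this
  linarith

lemma Hc_le_sum (hp : FiniteEntropy p) (C I : Finset (Fin n)) :
    Hc p I C ≤ ∑ q ∈ I, Hc p {q} C := by
  induction I using Finset.induction_on with
  | empty => simp [Hc_empty]
  | @insert i s hi ih =>
    rw [Finset.sum_insert hi, Finset.insert_eq]
    have h1 := Hc_subadd p hp {i} s C
    linarith

end AuxHc

section AuxJ

variable {n : ℕ} (p : PMF (Fin n → ℕ))

lemma J_zero (C : Finset (Fin n)) : J p C 0 = 0 := by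
  simp [J, Hc, Multiset.sup_zero, Finset.bot_eq_empty, Finset.empty_union]

lemma J_cons_ge (hp : FiniteEntropy p) (C Q : Finset (Fin n))
    (Qs : Multiset (Finset (Fin n))) : J p C Qs ≤ J p C (Q ::ₘ Qs) := by
  simp only [J, Multiset.map_cons, Multiset.sum_cons, Multiset.sup_cons,
    Finset.sup_eq_union]
  have h := Hc_subadd p hp Q Qs.sup C
  linarith

lemma J_nonneg (hp : FiniteEntropy p) (C : Finset (Fin n))
    (Qs : Multiset (Finset (Fin n))) : 0 ≤ J p C Qs := by
  induction Qs using Multiset.induction_on with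
  | empty => rw [J_zero]
  | cons Q Qs ih => exact le_trans ih (J_cons_ge p hp C Q Qs)

lemma J_pair (C Q1 Q2 : Finset (Fin n)) :
    J p C (Q1 ::ₘ Q2 ::ₘ 0) = Hc p Q1 C + Hc p Q2 C - Hc p (Q1 ∪ Q2) C := by
  simp only [J, Multiset.map_cons, Multiset.map_zero, Multiset.sum_cons,
    Multiset.sum_zero, Multiset.sup_cons, Multiset.sup_zero, sup_bot_eq,
    Finset.sup_eq_union]
  ring

lemma J_pair_le (hp : FiniteEntropy p) (C Q1 Q2 : Finset (Fin n))
    (rest : Multiset (Finset (Fin n))) :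
    Hc p Q1 C + Hc p Q2 C - Hc p (Q1 ∪ Q2) C ≤ J p C (Q1 ::ₘ Q2 ::ₘ rest) := by
  rw [← J_pair p C Q1 Q2]
  induction rest using Multiset.induction_on with
  | empty => exact le_rfl
  | cons r t ih =>
    calc J p C (Q1 ::ₘ Q2 ::ₘ 0) ≤ J p C (Q1 ::ₘ Q2 ::ₘ t) := ih
      _ ≤ J p C (r ::ₘ Q1 ::ₘ Q2 ::ₘ t) := J_cons_ge p hp C r _
      _ = J p C (Q1 ::ₘ Q2 ::ₘ r ::ₘ t) := by
          rw [Multiset.cons_swap r Q1, Multiset.cons_swap r Q2]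

lemma exists_two (q : Fin n) (K : CMI n) (hq : q ∈ repSet K) :
    ∃ Q1 Q2 rest, K.Qs = Q1 ::ₘ Q2 ::ₘ rest ∧ q ∈ Q1 ∧ q ∈ Q2 := by
  have h2 : 2 ≤ Multiset.card (K.Qs.filter fun Q => q ∈ Q) := by
    simpa [repSet] using hq
  set F := K.Qs.filter fun Q => q ∈ Q with hF
  have hF0 : F ≠ 0 := by
    intro h
    rw [h] at h2
    simp at h2
  obtain ⟨Q1, hQ1⟩ := Multiset.exists_mem_of_ne_zero hF0
  have hq1 : q ∈ Q1 := (Multiset.mem_filter.1 hQ1).2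
  have hcons := Multiset.cons_erase hQ1
  have hcard1 : 1 ≤ Multiset.card (F.erase Q1) := by
    rw [Multiset.card_erase_of_mem hQ1, Nat.pred_eq_sub_one]
    omega
  have hE0 : F.erase Q1 ≠ 0 := by
    intro h
    rw [h] at hcard1
    simp at hcard1
  obtain ⟨Q2, hQ2⟩ := Multiset.exists_mem_of_ne_zero hE0
  have hq2 : q ∈ Q2 :=
    (Multiset.mem_filter.1 (Multiset.mem_of_mem_erase hQ2)).2
  have hcons2 := Multiset.cons_erase hQ2
  have hle : Q1 ::ₘ Q2 ::ₘ ((F.erase Q1).erase Q2) ≤ K.Qs := by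
    rw [hcons2, hcons]
    exact Multiset.filter_le _ _
  obtain ⟨u, hu⟩ := Multiset.le_iff_exists_add.1 hle
  refine ⟨Q1, Q2, ((F.erase Q1).erase Q2) + u, ?_, hq1, hq2⟩
  rw [hu]
  simp [Multiset.cons_add]

lemma sup_filter_ne (s : Multiset (Finset (Fin n))) :
    (s.filter fun P => P ≠ ∅).sup = s.sup := by
  induction s using Multiset.induction_on with
  | empty => simp
  | cons a t ih =>
    rw [Multiset.filter_cons, Multiset.sup_cons]
    by_cases ha : a ≠ ∅
    · rw [if_pos ha, Multiset.singleton_add, Multiset.sup_cons, ih]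
    · rw [if_neg ha, zero_add, ih]
      push_neg at ha
      rw [ha, ← Finset.bot_eq_empty, bot_sup_eq]

lemma sup_map_sdiff (s : Multiset (Finset (Fin n))) (I : Finset (Fin n)) :
    (s.map fun Q => Q \ I).sup = s.sup \ I := by
  induction s using Multiset.induction_on with
  | empty => simp [Finset.bot_eq_empty, Finset.empty_sdiff]
  | cons a t ih =>
    simp only [Multiset.map_cons, Multiset.sup_cons, ih, Finset.sup_eq_union,
      Finset.union_sdiff_distrib]

lemma J_parts_eq (hp : FiniteEntropy p) (K : CMI n)
    (hI : Hc p (repSet K) K.C = 0) : J p K.C K.Qs = J p K.C (parts K) := by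
  have hHcI : ∀ Q, Hc p Q K.C = Hc p (Q \ repSet K) K.C :=
    fun Q => Hc_eq_sdiff p hp hI Q
  have hsum : (K.Qs.map fun Q => Hc p Q K.C).sum
      = ((parts K).map fun P => Hc p P K.C).sum := by
    have hzero : (((K.Qs.map fun Q => Q \ repSet K).filter fun P => ¬ P ≠ ∅).map
        fun P => Hc p P K.C).sum = 0 := by
      refine Multiset.sum_eq_zero ?_
      intro x hx
      obtain ⟨P, hP, hPx⟩ := Multiset.mem_map.1 hx
      have hPe : P = ∅ := by
        have := (Multiset.mem_filter.1 hP).2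
        push_neg at this
        exact this
      rw [← hPx, hPe, Hc_empty]
    calc (K.Qs.map fun Q => Hc p Q K.C).sum
        = ((K.Qs.map fun Q => Q \ repSet K).map fun P => Hc p P K.C).sum := by
          rw [Multiset.map_map]
          exact congrArg _ (Multiset.map_congr rfl fun Q _ => hHcI Q)
      _ = ((parts K).map fun P => Hc p P K.C).sum := by
          conv_lhs => rw [← Multiset.filter_add_not (fun P => P ≠ ∅)
            (K.Qs.map fun Q => Q \ repSet K)]
          rw [Multiset.map_add, Multiset.sum_add, hzero, add_zero]
          rfl
  have hsup : Hc p (parts K).sup K.C = Hc p K.Qs.sup K.C := by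
    have h1 : (parts K).sup = K.Qs.sup \ repSet K := by
      rw [parts, sup_filter_ne, sup_map_sdiff]
    rw [h1, ← hHcI]
  rw [J, J, hsum, hsup]

lemma repSet_zero (hp : FiniteEntropy p) (K : CMI n) (hJ : J p K.C K.Qs = 0) :
    Hc p (repSet K) K.C = 0 := by
  have hsingle : ∀ q ∈ repSet K, Hc p {q} K.C = 0 := by
    intro q hq
    obtain ⟨Q1, Q2, rest, hqs, hq1, hq2⟩ := exists_two q K hq
    have h1 : Hc p {q} K.C ≤ Hc p Q1 K.C + Hc p Q2 K.C - Hc p (Q1 ∪ Q2) K.C :=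
      Hc_single_le p hp hq1 hq2
    have h2 : Hc p Q1 K.C + Hc p Q2 K.C - Hc p (Q1 ∪ Q2) K.C ≤ J p K.C K.Qs := by
      rw [hqs]
      exact J_pair_le p hp K.C Q1 Q2 rest
    have h3 : 0 ≤ Hc p {q} K.C := Hc_nonneg p hp _ _
    linarith
  have h4 := Hc_le_sum p hp K.C (repSet K)
  have h5 : ∑ q ∈ repSet K, Hc p {q} K.C = 0 := Finset.sum_eq_zero hsingle
  have h6 : 0 ≤ Hc p (repSet K) K.C := Hc_nonneg p hp _ _
  linarith

end AuxJ

/-- a pure-form `K` is valid iff both `(C,⟨𝕀_K,𝕀_K⟩)` and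
`(C,⟨P_1,…,P_t⟩)` are valid; equivalently, iff `H(X_{𝕀_K}|X_C) = 0` and
`J(X_{P_i},1≤i≤t|X_C) = 0`. -/
theorem stmt6 {n : ℕ} (K : CMI n) (hpure : IsPure K)
    (p : PMF (Fin n → ℕ)) (hp : FiniteEntropy p) :
    (Valid p K ↔
      (Valid p ⟨K.C, {repSet K, repSet K}⟩ ∧ Valid p ⟨K.C, parts K⟩)) ∧
    (Valid p K ↔ (Hc p (repSet K) K.C = 0 ∧ J p K.C (parts K) = 0)) := by
  have hIC : Valid p ⟨K.C, {repSet K, repSet K}⟩ ↔ Hc p (repSet K) K.C = 0 := by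
    have hJ2 : J p K.C {repSet K, repSet K} = Hc p (repSet K) K.C := by
      show J p K.C (repSet K ::ₘ repSet K ::ₘ 0) = _
      rw [J_pair, Finset.union_self]
      ring
    show J p K.C {repSet K, repSet K} = 0 ↔ _
    rw [hJ2]
  have key : Valid p K ↔ (Hc p (repSet K) K.C = 0 ∧ J p K.C (parts K) = 0) := by
    constructor
    · intro hv
      have hI := repSet_zero p hp K hv
      exact ⟨hI, by rw [← J_parts_eq p hp K hI]; exact hv⟩
    · rintro ⟨hI, hP⟩
      show J p K.C K.Qs = 0
      rw [J_parts_eq p hp K hI]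
      exact hP
  refine ⟨?_, key⟩
  rw [key, hIC]
  exact Iff.rfl

end Paper
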